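/- Let n ≥ 1 and let λ₁ and λ₂ be Lyndon words over Σ whose lengths divide n. Then it is not possible that λ₁ < λ₂ ≤ λ₁^(n/|λ₁|) in the lexicographic order. -/

import Mathlib

namespace Lyndon

variable {α : Type*}

/-- `rot w c` is the cyclic rotation of `w` obtained by moving its first `c mod |w|`
letters to the end. -/
def rot (w : List α) (c : ℕ) : List α :=
  w.drop (c % w.length) ++ w.take (c % w.length)

/-- `power w k` is the concatenation of `k` copies of `w`. -/
def power (w : List α) (k : ℕ) : List α := (List.replicate k w).flatten

/-- `minrot w` is the lexicographically minimal cyclic rotation of `w`. -/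
def minrot [LinearOrder α] (w : List α) : List α :=
  ((List.range w.length).map (rot w)).foldr min w

/-- A word is self-minimal if it equals its minimal cyclic rotation. -/
def SelfMinimal [LinearOrder α] (w : List α) : Prop := minrot w = w

/-- A word is primitive if it is a `k`-th power (for a positive integer `k`)
only of itself. -/
def Primitive (w : List α) : Prop :=
  ∀ (u : List α) (k : ℕ), 0 < k → w = power u k → u = w

/-- A Lyndon word is a nonempty word that is primitive and self-minimal. -/
def IsLyndon [LinearOrder α] (w : List α) : Prop :=
  w ≠ [] ∧ Primitive w ∧ SelfMinimal w

/-- `Pref₋(w)`: the words `w_(i)·s` for `0 ≤ i ≤ n-1` and a letter `s < w[i+1]`,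
together with `w` itself. -/
def PrefMinus [LinearOrder α] (w : List α) : Set (List α) :=
  {y | (∃ i : Fin w.length, ∃ s : α, s < w.get i ∧ y = w.take i ++ [s]) ∨ y = w}

/-- `L(w)`: the words containing a factor (contiguous subword) from `Pref₋(w)`. -/
def InL [LinearOrder α] (w x : List α) : Prop :=
  ∃ y ∈ PrefMinus w, y <:+: x

/- power basics -/
theorem power_zero (u : List α) : power u 0 = [] := rfl

theorem power_succ (u : List α) (k : ℕ) : power u (k+1) = u ++ power u k := by
  simp [power, List.replicate_succ]

theorem power_add (u : List α) (a b : ℕ) : power u (a+b) = power u a ++ power u b := by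
  unfold power
  rw [List.replicate_add, List.flatten_append]

theorem power_one (u : List α) : power u 1 = u := by
  rw [power_succ, power_zero, List.append_nil]

theorem length_power (u : List α) (k : ℕ) : (power u k).length = k * u.length := by
  induction k with
  | zero => simp [power_zero]
  | succ k ih => rw [power_succ, List.length_append, ih]; ring

/- lex basics -/
section Lex
variable [LinearOrder α]

theorem lex_of_lt {x y : List α} (h : x < y) : List.Lex (· < ·) x y := h

theorem lt_of_lex {x y : List α} (h : List.Lex (· < ·) x y) : x < y := h

theorem append_lt_append_left_iff (u : List α) {x y : List α} :
    u ++ x < u ++ y ↔ x < y := by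
  induction u with
  | nil => rfl
  | cons a u ih =>
    show List.Lex _ (a :: (u ++ x)) (a :: (u ++ y)) ↔ _
    rw [List.lex_cons_iff]; exact ih

theorem lt_of_diff {u x y : List α} {a b : α} (h : a < b) :
    u ++ a :: x < u ++ b :: y := by
  rw [append_lt_append_left_iff]
  exact List.Lex.rel h

theorem prefix_lt {x y : List α} (h : x <+: y) (hne : x ≠ y) : x < y := by
  obtain ⟨z, rfl⟩ := h
  cases z with
  | nil => simp at hne
  | cons c z =>
    conv_lhs => rw [← List.append_nil x]
    rw [append_lt_append_left_iff]
    exact List.Lex.nil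

theorem lt_inv {x y : List α} (h : x < y) :
    (x <+: y ∧ x ≠ y) ∨
      ∃ (u s t : List α) (a b : α), a < b ∧ x = u ++ a :: s ∧ y = u ++ b :: t := by
  have h' := lex_of_lt h
  clear h
  induction h' with
  | nil =>
    left
    exact ⟨⟨_, rfl⟩, by simp⟩
  | @cons a l₁ l₂ hlex ih =>
    rcases ih with ⟨⟨z, hz⟩, hne⟩ | ⟨u, s, t, c, d, hcd, hx, hy⟩
    · left
      exact ⟨⟨z, by rw [← hz]; rfl⟩, by simpa using hne⟩
    · right
      exact ⟨a :: u, s, t, c, d, hcd, by rw [hx]; rfl, by rw [hy]; rfl⟩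
  | @rel a l₁ b l₂ hab =>
    right
    exact ⟨[], l₁, l₂, a, b, hab, rfl, rfl⟩

theorem lt_of_append_right {x y z : List α} (hlen : x.length = y.length)
    (h : x ++ z < y ++ z) : x < y := by
  induction x generalizing y with
  | nil =>
    cases y with
    | nil => exact absurd h (lt_irrefl _)
    | cons b y => simp at hlen
  | cons a x ih =>
    cases y with
    | nil => simp at hlen
    | cons b y =>
      rw [List.cons_append, List.cons_append] at h
      cases lex_of_lt h with
      | cons h' =>
        exact lt_of_lex (List.Lex.cons (lex_of_lt (ih (by simpa using hlen) (lt_of_lex h'))))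
      | rel h' => exact lt_of_lex (List.Lex.rel h')

end Lex

section Min
variable [LinearOrder α]

theorem foldr_min_le {l : List (List α)} {b a : List α} (ha : a ∈ l) :
    l.foldr min b ≤ a := by
  induction l with
  | nil => simp at ha
  | cons c l ih =>
    rcases List.mem_cons.mp ha with rfl | ha
    · exact min_le_left _ _
    · exact le_trans (min_le_right _ _) (ih ha)

theorem selfMinimal_le_rot {w : List α} (h : SelfMinimal w) (c : ℕ) : w ≤ rot w c := by
  rcases eq_or_ne w [] with rfl | hw
  · simp [rot]
  · have hn : 0 < w.length := List.length_pos_iff.mpr hw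
    have h1 : rot w c = rot w (c % w.length) := by
      unfold rot
      rw [Nat.mod_mod_of_dvd _ dvd_rfl]
    rw [h1]
    have : rot w (c % w.length) ∈ (List.range w.length).map (rot w) :=
      List.mem_map.mpr ⟨c % w.length, List.mem_range.mpr (Nat.mod_lt _ hn), rfl⟩
    calc w = minrot w := h.symm
    _ ≤ rot w (c % w.length) := foldr_min_le this

end Min

/- commuting words are powers of a common word -/
theorem comm_power : ∀ (N : ℕ) (x y : List α), x.length + y.length ≤ N →
    x ++ y = y ++ x → ∃ (z : List α) (k m : ℕ), x = power z k ∧ y = power z m := by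
  intro N
  induction N with
  | zero =>
    intro x y hlen _
    have hx : x = [] := List.length_eq_zero_iff.mp (by omega)
    have hy : y = [] := List.length_eq_zero_iff.mp (by omega)
    exact ⟨[], 0, 0, by simp [hx, power_zero], by simp [hy, power_zero]⟩
  | succ N ih =>
    intro x y hlen hcomm
    rcases eq_or_ne x [] with rfl | hx
    · exact ⟨y, 0, 1, (power_zero y).symm, (power_one y).symm⟩
    rcases eq_or_ne y [] with rfl | hy
    · exact ⟨x, 1, 0, (power_one x).symm, (power_zero x).symm⟩
    have hxpos : 0 < x.length := List.length_pos_iff.mpr hx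
    have hypos : 0 < y.length := List.length_pos_iff.mpr hy
    rcases le_total x.length y.length with hle | hle
    · -- x is a prefix of y
      have hpre : y.take x.length = x := by
        have := congrArg (List.take x.length) hcomm
        rw [List.take_append, List.take_append] at this
        simp only [List.take_length, Nat.sub_self, List.take_zero, List.append_nil] at this
        rw [Nat.sub_eq_zero_of_le hle] at this
        simpa using this.symm
      set t := y.drop x.length with ht
      have hyxt : y = x ++ t := by rw [← hpre, List.take_append_drop]
      have hcomm' : x ++ t = t ++ x := by
        have : x ++ (x ++ t) = (x ++ t) ++ x := by rw [← hyxt, hcomm]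
        rw [List.append_assoc] at this
        exact List.append_cancel_left this
      have hlen' : x.length + t.length ≤ N := by
        have : t.length = y.length - x.length := by rw [ht, List.length_drop]
        omega
      obtain ⟨z, k, m, hxz, htz⟩ := ih x t hlen' hcomm'
      exact ⟨z, k, k + m, hxz, by rw [hyxt, power_add, hxz, htz]⟩
    · -- y is a prefix of x
      have hpre : x.take y.length = y := by
        have := congrArg (List.take y.length) hcomm.symm
        rw [List.take_append, List.take_append] at this
        simp only [List.take_length, Nat.sub_self, List.take_zero, List.append_nil] at this
        rw [Nat.sub_eq_zero_of_le hle] at this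
        simpa using this.symm
      set t := x.drop y.length with ht
      have hyxt : x = y ++ t := by rw [← hpre, List.take_append_drop]
      have hcomm' : y ++ t = t ++ y := by
        have : y ++ (y ++ t) = (y ++ t) ++ y := by rw [← hyxt, hcomm.symm]
        rw [List.append_assoc] at this
        exact List.append_cancel_left this
      have hlen' : y.length + t.length ≤ N := by
        have : t.length = x.length - y.length := by rw [ht, List.length_drop]
        omega
      obtain ⟨z, k, m, hyz, htz⟩ := ih y t hlen' hcomm'
      exact ⟨z, k + m, k, by rw [hyxt, power_add, hyz, htz], hyz⟩

theorem rot_ne {w : List α} (hp : Primitive w) {c : ℕ} (hc0 : 0 < c)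
    (hcn : c < w.length) : rot w c ≠ w := by
  intro h
  have hmod : c % w.length = c := Nat.mod_eq_of_lt hcn
  rw [rot, hmod] at h
  set x := w.take c with hx
  set y := w.drop c with hy
  have hw : w = x ++ y := (List.take_append_drop c w).symm
  have hcomm : x ++ y = y ++ x := by rw [← hw, h]
  obtain ⟨z, k, m, hxz, hyz⟩ := comm_power (x.length + y.length) x y le_rfl hcomm
  have hxlen : x.length = c := by rw [hx, List.length_take]; omega
  have hylen : y.length = w.length - c := by rw [hy, List.length_drop]
  have hzk : w = power z (k + m) := by rw [hw, power_add, hxz, hyz]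
  have hkm : 0 < k + m := by
    by_contra h0
    have hz : k + m = 0 := by omega
    rw [hz, power_zero] at hzk
    rw [hzk] at hcn
    simp at hcn
  have hzw := hp z (k + m) hkm hzk
  have hk : 0 < k := by
    rcases Nat.eq_zero_or_pos k with rfl | h0
    · exfalso
      rw [power_zero] at hxz
      rw [hxz] at hxlen
      simp at hxlen
      omega
    · exact h0
  have := congrArg List.length hxz
  rw [length_power, hzw] at this
  have : c = k * w.length := by omega
  nlinarith [hk, hcn]

theorem lyndon_lt_rot [LinearOrder α] {w : List α} (h : IsLyndon w) {c : ℕ}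
    (hc0 : 0 < c) (hcn : c < w.length) : w < rot w c := by
  rcases lt_or_eq_of_le (selfMinimal_le_rot h.2.2 c) with hlt | heq
  · exact hlt
  · exact absurd heq.symm (rot_ne h.2.1 hc0 hcn)

/-- A Lyndon word is smaller than each of its proper nonempty suffixes. -/
theorem lyndon_lt_suffix [LinearOrder α] {w p q : List α} (h : IsLyndon w)
    (hw : w = p ++ q) (hp : p ≠ []) (hq : q ≠ []) : w < q := by
  have hplen : 0 < p.length := List.length_pos_iff.mpr hp
  have hqlen : 0 < q.length := List.length_pos_iff.mpr hq
  have hwlen : w.length = p.length + q.length := by rw [hw, List.length_append]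
  have hrot1 : rot w p.length = q ++ p := by
    rw [rot, Nat.mod_eq_of_lt (by omega), hw, List.drop_left, List.take_left]
  have h1 : w < q ++ p := by
    rw [← hrot1]; exact lyndon_lt_rot h hplen (by omega)
  rcases lt_inv h1 with ⟨hpre, hne⟩ | ⟨u, s, t, a, b, hab, hxu, hyu⟩
  · exfalso
    exact hne (List.IsPrefix.eq_of_length hpre (by rw [hwlen, List.length_append]; omega))
  · -- w = u ++ a :: s,  q ++ p = u ++ b :: t
    rcases Nat.lt_or_ge u.length q.length with hiq | hiq
    · -- difference inside q : w < q
      have hq' : q = u ++ b :: (t.take (q.length - u.length - 1)) := by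
        have h2 : (q ++ p).take q.length = q := List.take_left
        rw [hyu, List.take_append,
          List.take_of_length_le (le_of_lt hiq)] at h2
        have h3 : q.length - u.length = (q.length - u.length - 1) + 1 := by omega
        rw [h3, List.take_succ_cons] at h2
        exact h2.symm
      rw [hxu, hq']
      exact lt_of_diff hab
    · -- q is a prefix of w (border) : contradiction
      have hqpre : w.take q.length = q := by
        have e1 : w.take u.length = u := by rw [hxu, List.take_left]
        have e2 : (q ++ p).take u.length = u := by rw [hyu, List.take_left]
        have f1 : w.take q.length = u.take q.length := by
          rw [← e1, List.take_take, min_eq_left hiq]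
        have f2 : (q ++ p).take q.length = u.take q.length := by
          rw [← e2, List.take_take, min_eq_left hiq]
        rw [f1, ← f2, List.take_left]
      set r := w.drop q.length with hr
      have hwqr : w = q ++ r := by rw [← hqpre, hr, List.take_append_drop]
      have hrlen : r.length = p.length := by rw [hr, List.length_drop]; omega
      have hrne : r ≠ [] := by
        intro h0; rw [h0] at hrlen; simp at hrlen; omega
      have hrot2 : rot w q.length = r ++ q := by
        rw [rot, Nat.mod_eq_of_lt (by omega), hqpre, hr]
      have h2 : w < r ++ q := by
        rw [← hrot2]; exact lyndon_lt_rot h hqlen (by omega)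
      -- p ++ q < r ++ q gives p < r
      have hpr : p < r := by
        apply lt_of_append_right (by omega)
        rw [← hw]; exact h2
      -- q ++ r < q ++ p gives r < p
      have hrp : r < p :=
        (append_lt_append_left_iff q).mp (by rw [← hwqr]; exact h1)
      exact absurd hpr (lt_asymm hrp)

theorem take_power {u : List α} {q k : ℕ} (h : q ≤ k) :
    (power u k).take (q * u.length) = power u q := by
  have hsplit : power u k = power u q ++ power u (k - q) := by
    rw [← power_add]; congr 1; omega
  rw [hsplit, List.take_append,
    List.take_of_length_le (by rw [length_power]), length_power, Nat.sub_self,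
    List.take_zero, List.append_nil]

theorem take_power_small {u : List α} {r k : ℕ} (hr : r ≤ u.length) (hk : 1 ≤ k) :
    (power u k).take r = u.take r := by
  have hsplit : power u k = u ++ power u (k - 1) := by
    conv_lhs => rw [show k = 1 + (k - 1) by omega]
    rw [power_add, power_one]
  rw [hsplit, List.take_append, Nat.sub_eq_zero_of_le hr,
    List.take_zero, List.append_nil]

/-- For Lyndon words `λ₁, λ₂` with lengths dividing `n ≥ 1`, it is impossible that
`λ₁ < λ₂ ≤ λ₁^(n/|λ₁|)`. -/
theorem stmt_3 [LinearOrder α] [Fintype α] [Nonempty α]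
    (n : ℕ) (hn : 1 ≤ n) (l1 l2 : List α)
    (h1 : IsLyndon l1) (h2 : IsLyndon l2)
    (hd1 : l1.length ∣ n) (hd2 : l2.length ∣ n) :
    ¬ (l1 < l2 ∧ l2 ≤ power l1 (n / l1.length)) := by
  rintro ⟨hlt, hle⟩
  set L := l1.length with hLdef
  have hL : 0 < L := List.length_pos_iff.mpr h1.1
  set k := n / L with hkdef
  have hnk : k * L = n := by
    rw [hkdef, Nat.div_mul_cancel hd1]
  have hk1 : 1 ≤ k := by
    rcases Nat.eq_zero_or_pos k with h0 | h0
    · rw [h0] at hnk; omega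
    · exact h0
  set P := power l1 k with hPdef
  have hPlen : P.length = n := by rw [hPdef, length_power, hnk]
  have hPk1 : P = l1 ++ power l1 (k - 1) := by
    rw [hPdef]
    conv_lhs => rw [show k = 1 + (k - 1) by omega]
    rw [power_add, power_one]
  -- rule out l2 = P
  rcases lt_or_eq_of_le hle with h2P | h2P
  swap
  · have := h2.2.1 l1 k (by omega) h2P
    rw [this] at hlt
    exact lt_irrefl _ hlt
  clear hle
  rcases lt_inv h2P with ⟨⟨z, hz⟩, _⟩ | ⟨u, s, t, a, b, hab, hxu, hyu⟩
  · -- Case A : l2 is a prefix of P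
    set M := l2.length with hMdef
    have hMn : M ≤ n := by
      have := congrArg List.length hz
      rw [List.length_append, hPlen] at this
      omega
    set q := M / L with hqdef
    set r := M % L with hrdef
    have hqr : L * q + r = M := Nat.div_add_mod M L
    have hrL : r < L := Nat.mod_lt _ hL
    have hqk : q ≤ k := by
      rw [hqdef, hkdef]
      exact Nat.div_le_div_right hMn
    have hl2take : l2 = P.take M := by rw [← hz, List.take_left' rfl]
    have hsplit : P = power l1 q ++ power l1 (k - q) := by
      rw [hPdef, ← power_add]; congr 1; omega
    have hqLc : q * L = L * q := Nat.mul_comm _ _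
    have hl2eq : l2 = power l1 q ++ (power l1 (k - q)).take r := by
      rw [hl2take, hsplit, List.take_append, length_power,
        List.take_of_length_le (by rw [length_power, ← hLdef]; omega)]
      congr 2
      rw [← hLdef]
      omega
    rcases Nat.eq_zero_or_pos r with hr0 | hr0
    · -- l2 is a power of l1
      rw [hr0, List.take_zero, List.append_nil] at hl2eq
      have hq1 : 0 < q := by
        rcases Nat.eq_zero_or_pos q with h0 | h0
        · rw [h0, power_zero] at hl2eq
          exact absurd hl2eq h2.1
        · exact h0
      have := h2.2.1 l1 q hq1 hl2eq
      rw [this] at hlt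
      exact lt_irrefl _ hlt
    have hqk' : q < k := by
      rcases Nat.lt_or_ge q k with h | h
      · exact h
      · exfalso
        have hqe : q = k := le_antisymm hqk h
        rw [hqe, Nat.mul_comm] at hqr
        omega
    rw [take_power_small (le_of_lt hrL) (by omega)] at hl2eq
    rcases Nat.eq_zero_or_pos q with hq0 | hq0
    · -- l2 is a proper prefix of l1
      rw [hq0, power_zero, List.nil_append] at hl2eq
      have hpre : l2 <+: l1 := hl2eq ▸ List.take_prefix r l1
      have hne : l2 ≠ l1 := by
        intro h0
        have := congrArg List.length hl2eq
        rw [h0, List.length_take] at this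
        omega
      exact absurd (prefix_lt hpre hne) (lt_asymm hlt)
    · -- l2 = power l1 q ++ l1.take r with q ≥ 1, 0 < r < L
      set p := l1.take r with hpdef
      set q' := l1.drop r with hq'def
      have hl1pq : l1 = p ++ q' := (List.take_append_drop r l1).symm
      have hplen : p.length = r := by
        rw [hpdef, List.length_take, min_eq_left (le_of_lt hrL)]
      have hq'len : q'.length = L - r := by rw [hq'def, List.length_drop]
      have hpne : p ≠ [] := by
        intro h0
        rw [h0] at hplen
        simp at hplen
        omega
      have hq'ne : q' ≠ [] := by
        intro h0
        rw [h0] at hq'len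
        simp at hq'len
        omega
      have hlyn : l1 < q' := lyndon_lt_suffix h1 hl1pq hpne hq'ne
      rcases lt_inv hlyn with ⟨hpre, _⟩ | ⟨u0, s0, t0, a0, b0, hab0, hxu0, hyu0⟩
      · exfalso
        have := hpre.length_le
        omega
      -- l1 = u0 ++ a0 :: s0, q' = u0 ++ b0 :: t0, a0 < b0
      have hMlen : l2.length = L * q + r := hqr.symm
      have hMbig : L < l2.length := by
        have h5 : L * 1 ≤ L * q := Nat.mul_le_mul_left L hq0
        rw [Nat.mul_one] at h5
        omega
      have hl2decomp : l2 = l1 ++ (power l1 (q - 1) ++ p) := by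
        rw [hl2eq]
        conv_lhs => rw [show q = 1 + (q - 1) by omega]
        rw [power_add, power_one, List.append_assoc]
      have hrot : rot l2 L = (power l1 (q - 1) ++ p) ++ l1 := by
        rw [rot, Nat.mod_eq_of_lt hMbig, hl2decomp, List.drop_left, List.take_left]
      have hup : l2 < rot l2 L := lyndon_lt_rot h2 hL hMbig
      have hdown : rot l2 L < l2 := by
        rw [hrot, hl2decomp]
        have key : p ++ l1 < l1 ++ p := by
          have e1 : p ++ l1 = (p ++ u0) ++ a0 :: s0 := by
            rw [hxu0, List.append_assoc]
          have e2 : l1 ++ p = (p ++ u0) ++ b0 :: (t0 ++ p) := by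
            conv_lhs => rw [hl1pq, hyu0]
            simp [List.append_assoc]
          rw [e1, e2]
          exact lt_of_diff hab0
        calc (power l1 (q - 1) ++ p) ++ l1 = power l1 (q - 1) ++ (p ++ l1) := by
              rw [List.append_assoc]
        _ < power l1 (q - 1) ++ (l1 ++ p) := by
              rw [append_lt_append_left_iff]; exact key
        _ = l1 ++ (power l1 (q - 1) ++ p) := by
              have hcomm : l1 ++ power l1 (q - 1) = power l1 (q - 1) ++ l1 := by
                have e1 := power_add l1 1 (q - 1)
                have e2 := power_add l1 (q - 1) 1
                rw [power_one] at e1 e2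
                rw [← e1, ← e2]
                congr 1
                omega
              rw [← List.append_assoc, ← List.append_assoc, hcomm]
      exact absurd hup (lt_asymm hdown)
  · -- Case B : letter difference
    set i := u.length with hidef
    have hiP : u = P.take i := by rw [hyu, List.take_left]
    have hin : i < n := by
      have := congrArg List.length hyu
      rw [hPlen, List.length_append, List.length_cons] at this
      omega
    rcases Nat.lt_or_ge i L with hiL | hiL
    · -- difference within l1 : l2 < l1
      have hl1eq : l1 = u ++ b :: (t.take (L - i - 1)) := by
        have e1 : P.take L = l1 := by rw [hPk1, List.take_left' rfl]
        rw [hyu, List.take_append,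
          List.take_of_length_le (by omega)] at e1
        have h3 : L - i = (L - i - 1) + 1 := by omega
        rw [h3, List.take_succ_cons] at e1
        exact e1.symm
      have : l2 < l1 := by
        rw [hxu, hl1eq]
        exact lt_of_diff hab
      exact absurd this (lt_asymm hlt)
    · -- i ≥ L : l1 is a prefix of l2, rotate l2 by L
      have hl2len : L < l2.length := by
        have := congrArg List.length hxu
        rw [List.length_append, List.length_cons] at this
        omega
      have hPtakeL : P.take L = l1 := by rw [hPk1, List.take_left' rfl]
      have f1 : l2.take L = l1 := by
        rw [hxu, List.take_append, Nat.sub_eq_zero_of_le hiL,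
          List.take_zero, List.append_nil, hiP, List.take_take,
          min_eq_left hiL, hPtakeL]
      have hPdrop : P.drop L = power l1 (k - 1) := by
        rw [hPk1, List.drop_left]
      have hPpow : power l1 (k - 1) = P.take ((k - 1) * L) := (take_power (by omega)).symm
      have hkL : (k - 1) * L = n - L := by
        rw [Nat.sub_mul, one_mul, hnk]
      have f6 : u.drop L = u.take (i - L) := by
        have e0 : u.take (i - L) = P.take (i - L) := by
          rw [hiP, List.take_take, min_eq_left (by omega : i - L ≤ i)]
        rw [e0, hiP, List.drop_take, hPdrop, hPpow, List.take_take,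
          min_eq_left (by omega)]
      have g1 : P.take (i - L + 1) = u.take (i - L) ++ [b] := by
        have e1 : P.take (i + 1) = u ++ [b] := by
          rw [hyu, List.take_append,
            List.take_of_length_le (by omega), show i + 1 - i = 1 by omega]
          rfl
        have e2 : P.take (i - L + 1) = (P.drop L).take (i - L + 1) := by
          rw [hPdrop, hPpow, List.take_take, min_eq_left (by omega)]
        have e3 : (P.take (i + 1)).drop L = (P.drop L).take (i - L + 1) := by
          rw [List.drop_take, show i + 1 - L = i - L + 1 by omega]
        rw [e2, ← e3, e1, List.drop_append,
          Nat.sub_eq_zero_of_le hiL, List.drop_zero, f6]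
      have g2 : l2.take (i - L + 1) = u.take (i - L) ++ [b] := by
        rw [hxu, List.take_append,
          Nat.sub_eq_zero_of_le (by omega : i - L + 1 ≤ i), List.take_zero,
          List.append_nil, hiP, List.take_take, min_eq_left (by omega), ← hiP]
        exact g1
      have g3 : l2 = u.take (i - L) ++ b :: l2.drop (i - L + 1) := by
        conv_lhs => rw [← List.take_append_drop (i - L + 1) l2]
        rw [g2, List.append_assoc, List.singleton_append]
      have hrot : rot l2 L = u.take (i - L) ++ a :: (s ++ l1) := by
        rw [rot, Nat.mod_eq_of_lt hl2len, f1, hxu,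
          List.drop_append, Nat.sub_eq_zero_of_le hiL,
          List.drop_zero, f6, List.append_assoc, List.cons_append]
      have hup : l2 < rot l2 L := lyndon_lt_rot h2 hL hl2len
      have hdown : rot l2 L < l2 := by
        rw [hrot]
        conv_rhs => rw [g3]
        exact lt_of_diff hab
      exact absurd hup (lt_asymm hdown)


end Lyndon
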